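/- Assume the adversary-strength conditions 4λ_m > η²/R_u and 4λ_v ≥ χ²/R, and set C_m := 4λ_m − η²/R_u > 0. Then every sextuple of differentiable functions (a₀, a₁, a₂, a₁₁, a₁₂, a₂₂) : [t₀, T] → ℝ⁶ solving the coupled Riccati ODE system with the terminal conditions a₂(T) = G_v, a₁₁(T) = G_m, a₀(T) = a₁(T) = a₁₂(T) = a₂₂(T) = 0 satisfies T − t₀ < π/√(w₁·C_m). Consequently, for horizons T exceeding this critical length, no solution of the terminal-value Riccati system exists on [0, T] (finite-cost robust control fails). -/

import Mathlib

set_option maxHeartbeats 800000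


/-- Assume `4λm > η²/Ru` and `4λv ≥ χ²/R`, and set
`Cm = 4λm − η²/Ru > 0`.  Then every sextuple of differentiable functions on `[t₀, T]`
solving the coupled Riccati ODE system with terminal conditions `a₂(T) = Gv`,
`a₁₁(T) = Gm`, `a₀(T) = a₁(T) = a₁₂(T) = a₂₂(T) = 0` satisfies
`T − t₀ < π/√(w₁·Cm)`. -/
theorem riccati_blowup_horizon_bound
    (β η χ w₁ w₂bar κ Ru R lm lv σL σc Gm Gv t₀ T : ℝ)
    (hβ : 0 < β) (hη : 0 < η) (hχ : 0 < χ) (hw₁ : 0 < w₁) (hw₂ : 0 < w₂bar)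
    (hκ : 0 < κ) (hRu : 0 < Ru) (hR : 0 < R) (hlm : 0 < lm) (hlv : 0 < lv)
    (hGm : 0 ≤ Gm) (hGv : 0 ≤ Gv) (ht : t₀ ≤ T)
    (hadvm : 4 * lm > η ^ 2 / Ru) (hadvv : 4 * lv ≥ χ ^ 2 / R)
    (a0 a1 a2 a11 a12 a22 : ℝ → ℝ)
    (h0 : ∀ t ∈ Set.Icc t₀ T, HasDerivWithinAt a0
      ((σL ^ 2 + σc ^ 2) * a2 t + (lm - η ^ 2 / (4 * Ru)) * a1 t ^ 2
        + (lv - χ ^ 2 / (4 * R)) * a2 t ^ 2) (Set.Icc t₀ T) t)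
    (h1 : ∀ t ∈ Set.Icc t₀ T, HasDerivWithinAt a1
      ((σL ^ 2 + σc ^ 2) * a12 t + (4 * lm - η ^ 2 / Ru) * a1 t * a11 t
        + (2 * lv - χ ^ 2 / (2 * R)) * a2 t * a12 t) (Set.Icc t₀ T) t)
    (h2 : ∀ t ∈ Set.Icc t₀ T, HasDerivWithinAt a2
      (w₂bar - 2 * β * a2 t + 2 * (σL ^ 2 + σc ^ 2) * a22 t
        + (2 * lm - η ^ 2 / (2 * Ru)) * a1 t * a12 t
        + (4 * lv - χ ^ 2 / R) * a2 t * a22 t - η * κ / (2 * Ru) * a1 t)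
      (Set.Icc t₀ T) t)
    (h11 : ∀ t ∈ Set.Icc t₀ T, HasDerivWithinAt a11
      (w₁ + (4 * lm - η ^ 2 / Ru) * a11 t ^ 2 + (lv - χ ^ 2 / (4 * R)) * a12 t ^ 2)
      (Set.Icc t₀ T) t)
    (h12 : ∀ t ∈ Set.Icc t₀ T, HasDerivWithinAt a12
      (-2 * β * a12 t - η * κ / Ru * a11 t + (4 * lm - η ^ 2 / Ru) * a11 t * a12 t
        + (4 * lv - χ ^ 2 / R) * a12 t * a22 t) (Set.Icc t₀ T) t)
    (h22 : ∀ t ∈ Set.Icc t₀ T, HasDerivWithinAt a22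
      (-4 * β * a22 t - κ ^ 2 / (4 * Ru) - η * κ / (2 * Ru) * a12 t
        + (lm - η ^ 2 / (4 * Ru)) * a12 t ^ 2 + (4 * lv - χ ^ 2 / R) * a22 t ^ 2)
      (Set.Icc t₀ T) t)
    (hT2 : a2 T = Gv) (hT11 : a11 T = Gm)
    (hT0 : a0 T = 0) (hT1 : a1 T = 0) (hT12 : a12 T = 0) (hT22 : a22 T = 0) :
    T - t₀ < Real.pi / Real.sqrt (w₁ * (4 * lm - η ^ 2 / Ru)) := by
  set C : ℝ := 4 * lm - η ^ 2 / Ru with hCdef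
  have hC : 0 < C := sub_pos.2 hadvm
  set ρ : ℝ := lv - χ ^ 2 / (4 * R) with hρdef
  have hρ : 0 ≤ ρ := by
    have h1 : χ ^ 2 / R ≤ 4 * lv := hadvv
    have h2 : χ ^ 2 ≤ 4 * lv * R := by
      have := (div_le_iff₀ hR).mp h1; linarith
    have : χ ^ 2 / (4 * R) ≤ lv := by
      rw [div_le_iff₀ (by positivity)]; nlinarith
    simpa [hρdef] using sub_nonneg.2 this
  set K : ℝ := Real.sqrt (w₁ * C) with hKdef
  have hKpos : 0 < K := Real.sqrt_pos.2 (by positivity)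
  have hK2 : K ^ 2 = w₁ * C := Real.sq_sqrt (by positivity)
  set c : ℝ := K / w₁ with hcdef
  have hcpos : 0 < c := div_pos hKpos hw₁
  have hcw : c * w₁ = K := by rw [hcdef]; field_simp [hw₁.ne']
  have hc2 : c ^ 2 * w₁ = C := by
    have : c ^ 2 * w₁ ^ 2 = K ^ 2 := by rw [← hcw]; ring
    have hw2 : (0:ℝ) < w₁ ^ 2 := by positivity
    nlinarith [this, hK2]
  -- the comparison function
  have key : ∀ a b : ℝ, 0 ≤ 1 / (1 + (c * a) ^ 2) *
      (c * (w₁ + C * a ^ 2 + ρ * b ^ 2)) - K * 1 := by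
    intro a b
    have hden : (0:ℝ) < 1 + (c * a) ^ 2 := by positivity
    rw [sub_nonneg, mul_one, one_div, ← div_eq_inv_mul, le_div_iff₀ hden]
    have e1 : K * (c * a) ^ 2 = c * (C * a ^ 2) := by
      rw [← hcw, ← hc2]; ring
    have e2 : c * (w₁ + C * a ^ 2 + ρ * b ^ 2) - K * (1 + (c * a) ^ 2)
        = c * ρ * b ^ 2 := by linear_combination hcw - e1
    nlinarith [mul_nonneg (mul_nonneg hcpos.le hρ) (sq_nonneg b), e2]
  set f : ℝ → ℝ := fun t => Real.arctan (c * a11 t) - K * t with hfdef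
  set f' : ℝ → ℝ := fun t =>
    1 / (1 + (c * a11 t) ^ 2) *
      (c * (w₁ + C * a11 t ^ 2 + ρ * a12 t ^ 2)) - K * 1 with hf'def
  have hderiv : ∀ t ∈ Set.Icc t₀ T, HasDerivWithinAt f (f' t) (Set.Icc t₀ T) t := by
    intro t htI
    have hd : HasDerivWithinAt (fun s => c * a11 s)
        (c * (w₁ + C * a11 t ^ 2 + ρ * a12 t ^ 2)) (Set.Icc t₀ T) t :=
      (h11 t htI).const_mul c
    have harc := (Real.hasDerivAt_arctan (c * a11 t)).comp_hasDerivWithinAt t hd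
    exact harc.sub ((hasDerivWithinAt_id t _).const_mul K)
  have hcont : ContinuousOn f (Set.Icc t₀ T) := fun t htI =>
    (hderiv t htI).continuousWithinAt
  have hf'nonneg : ∀ t, 0 ≤ f' t := fun t => key (a11 t) (a12 t)
  have hmono : MonotoneOn f (Set.Icc t₀ T) := by
    apply monotoneOn_of_hasDerivWithinAt_nonneg (convex_Icc t₀ T) hcont
      (f' := f')
    · intro x hx
      exact (hderiv x (interior_subset hx)).mono interior_subset
    · intro x _; exact hf'nonneg x
  have ht₀I : t₀ ∈ Set.Icc t₀ T := ⟨le_refl _, ht⟩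
  have hTI : T ∈ Set.Icc t₀ T := ⟨ht, le_refl _⟩
  have hle : f t₀ ≤ f T := hmono ht₀I hTI ht
  have hb1 : Real.arctan (c * a11 T) < Real.pi / 2 := Real.arctan_lt_pi_div_two _
  have hb2 : -(Real.pi / 2) < Real.arctan (c * a11 t₀) := Real.neg_pi_div_two_lt_arctan _
  have hKT : K * (T - t₀) < Real.pi := by
    have : K * T - K * t₀ ≤ Real.arctan (c * a11 T) - Real.arctan (c * a11 t₀) := by
      simp only [hfdef] at hle; linarith
    nlinarith [this, hb1, hb2]
  rw [lt_div_iff₀ hKpos]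
  nlinarith [hKT]
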